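/- The minimal indices for a configuration (3,3) GDD(n,2,6;λ₁,λ₂) when n ≡ 5 (mod 6) are (λ₁,λ₂) = (3n, 9(n−1)/2): any configuration (3,3) GDD(n,2,6;λ₁,λ₂) with n ≡ 5 (mod 6) has λ₁ a positive multiple of 3n and λ₂ the corresponding multiple of 9(n−1)/2. -/

import Mathlib

/-- A group divisible design with two groups of size `n` (the points are
`Fin 2 × Fin n`, the first coordinate indicating the group), blocks of size `k`,
each point lying in `rep` blocks, every pair of distinct points in the same
group lying in exactly `l1` blocks, and every pair of points in different
groups lying in exactly `l2` blocks. -/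
structure GDD (n k l1 l2 : ℕ) where
  blocks : Multiset (Finset (Fin 2 × Fin n))
  blockCard : ∀ B ∈ blocks, B.card = k
  rep : ℕ
  pointRep : ∀ x : Fin 2 × Fin n,
    (blocks.filter fun B => x ∈ B).card = rep
  samePairs : ∀ x y : Fin 2 × Fin n, x ≠ y → x.1 = y.1 →
    (blocks.filter fun B => x ∈ B ∧ y ∈ B).card = l1
  crossPairs : ∀ x y : Fin 2 × Fin n, x.1 ≠ y.1 →
    (blocks.filter fun B => x ∈ B ∧ y ∈ B).card = l2

/-- The design has fixed block configuration `(s,t)`: every block meets one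
group in exactly `s` points and the other group in exactly `t` points. -/
def GDD.HasConfig {n k l1 l2 : ℕ} (D : GDD n k l1 l2) (s t : ℕ) : Prop :=
  ∀ B ∈ D.blocks,
    ((B.filter fun p => p.1 = 0).card = s ∧ (B.filter fun p => p.1 = 1).card = t) ∨
    ((B.filter fun p => p.1 = 0).card = t ∧ (B.filter fun p => p.1 = 1).card = s)

/-- Double counting: summing filtered-block counts over an index set equals
summing, per block, the number of indices whose condition holds. -/
lemma sum_card_filter {α ι : Type*} (s : Finset ι)
    (q : ι → α → Prop) [∀ i a, Decidable (q i a)] (M : Multiset α) :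
    ∑ i ∈ s, Multiset.card (M.filter (q i)) =
      (M.map fun a => (s.filter fun i => q i a).card).sum := by
  induction M using Multiset.induction_on with
  | empty => simp
  | cons a M ih =>
    simp only [Multiset.map_cons, Multiset.sum_cons, Multiset.filter_cons,
      Multiset.card_add, apply_ite Multiset.card, Multiset.card_singleton,
      Multiset.card_zero]
    rw [Finset.sum_add_distrib, ih, Finset.card_filter]

lemma sum_map_const_on {α : Type*} (M : Multiset α) (p : α → Prop) [DecidablePred p]
    (c : ℕ) (f : α → ℕ) (hf : ∀ a ∈ M, f a = if p a then c else 0) :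
    (M.map f).sum = c * Multiset.card (M.filter p) := by
  induction M using Multiset.induction_on with
  | empty => simp
  | cons a M ih =>
    rw [Multiset.map_cons, Multiset.sum_cons, Multiset.filter_cons,
      ih (fun b hb => hf b (Multiset.mem_cons_of_mem hb)),
      hf a (Multiset.mem_cons_self a M)]
    by_cases h : p a <;> simp [h, Nat.mul_add, Nat.add_comm]

theorem stmt_18 (n l1 l2 : ℕ) (hn : n % 6 = 5) (hl : 0 < l1)
    (D : GDD n 6 l1 l2) (hc : D.HasConfig 3 3) :
    ∃ w : ℕ, 0 < w ∧ l1 = 3 * n * w ∧ 2 * l2 = 9 * (n - 1) * w := by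
  have npos : 0 < n := by omega
  set z : Fin n := ⟨0, npos⟩ with hz
  set x : Fin 2 × Fin n := (0, z) with hx
  have hcfg : ∀ B ∈ D.blocks, (B.filter fun p => p.1 = 0).card = 3 ∧
      (B.filter fun p => p.1 = 1).card = 3 := fun B hB => by
    rcases hc B hB with h | h <;> exact h
  -- Claim 0 : 2 * n * rep = 6 * b
  have h0 : 2 * n * D.rep = 6 * Multiset.card D.blocks := by
    have key := sum_card_filter (Finset.univ : Finset (Fin 2 × Fin n))
      (fun y B => y ∈ B) D.blocks
    simp only [D.pointRep, Finset.sum_const, smul_eq_mul] at key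
    rw [sum_map_const_on D.blocks (fun _ => True) 6 _
      (fun B hB => by simpa using D.blockCard B hB)] at key
    rw [Multiset.filter_eq_self.mpr (fun _ _ => trivial)] at key
    simp only [Finset.card_univ, Fintype.card_prod, Fintype.card_fin] at key
    exact key
  -- the set of points in group 0 other than x
  have hA : (Finset.univ.filter fun y : Fin 2 × Fin n => y.1 = 0) =
      ({(0 : Fin 2)} ×ˢ (Finset.univ : Finset (Fin n))) := by
    ext y
    simp only [Finset.mem_filter, Finset.mem_univ, true_and, Finset.mem_product,
      Finset.mem_singleton, and_true]
  -- Claim 1 : (n-1) * l1 = 2 * rep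
  have h1 : (n - 1) * l1 = 2 * D.rep := by
    set s1 : Finset (Fin 2 × Fin n) :=
      (Finset.univ.filter fun y : Fin 2 × Fin n => y.1 = 0).erase x with hs1
    have hs1card : s1.card = n - 1 := by
      rw [hs1, Finset.card_erase_of_mem (by simp [hx]), hA, Finset.card_product]
      simp
    have key := sum_card_filter s1 (fun y B => x ∈ B ∧ y ∈ B) D.blocks
    have hterm : ∀ y ∈ s1, Multiset.card
        (D.blocks.filter fun B => x ∈ B ∧ y ∈ B) = l1 := by
      intro y hy
      rw [hs1, Finset.mem_erase, Finset.mem_filter] at hy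
      exact D.samePairs x y (Ne.symm hy.1) hy.2.2.symm
    rw [Finset.sum_congr rfl hterm, Finset.sum_const, smul_eq_mul, hs1card] at key
    rw [sum_map_const_on D.blocks (fun B => x ∈ B) 2 _ ?_] at key
    · rw [key, D.pointRep]
    · intro B hB
      by_cases hxB : x ∈ B
      · rw [if_pos hxB]
        have : s1.filter (fun y => x ∈ B ∧ y ∈ B) =
            (B.filter fun p => p.1 = 0).erase x := by
          ext y
          simp only [hs1, Finset.mem_filter, Finset.mem_erase, Finset.mem_univ,
            true_and, hxB, and_true]
          tauto
        rw [this, Finset.card_erase_of_mem (by simpa [Finset.mem_filter, hx] using hxB),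
          (hcfg B hB).1]
      · simp [hxB]
  -- Claim 2 : n * l2 = 3 * rep
  have h2 : n * l2 = 3 * D.rep := by
    set s2 : Finset (Fin 2 × Fin n) :=
      (Finset.univ.filter fun y : Fin 2 × Fin n => y.1 = 1) with hs2
    have hs2card : s2.card = n := by
      have : s2 = ({(1 : Fin 2)} ×ˢ (Finset.univ : Finset (Fin n))) := by
        ext y
        simp only [hs2, Finset.mem_filter, Finset.mem_univ, true_and,
          Finset.mem_product, Finset.mem_singleton, and_true]
      rw [this, Finset.card_product]; simp
    have key := sum_card_filter s2 (fun y B => x ∈ B ∧ y ∈ B) D.blocks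
    have hterm : ∀ y ∈ s2, Multiset.card
        (D.blocks.filter fun B => x ∈ B ∧ y ∈ B) = l2 := by
      intro y hy
      rw [hs2, Finset.mem_filter] at hy
      refine D.crossPairs x y ?_
      have h1 : y.1 = 1 := hy.2
      have h0 : x.1 = 0 := rfl
      rw [h0, h1]
      decide
    rw [Finset.sum_congr rfl hterm, Finset.sum_const, smul_eq_mul, hs2card] at key
    rw [sum_map_const_on D.blocks (fun B => x ∈ B) 3 _ ?_] at key
    · rw [key, D.pointRep]
    · intro B hB
      by_cases hxB : x ∈ B
      · rw [if_pos hxB]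
        have : s2.filter (fun y => x ∈ B ∧ y ∈ B) = B.filter fun p => p.1 = 1 := by
          ext y
          simp only [hs2, Finset.mem_filter, Finset.mem_univ, true_and, hxB,
            true_and]
          tauto
        rw [this, (hcfg B hB).2]
      · simp [hxB]
  -- Arithmetic
  have hb : n * D.rep = 3 * Multiset.card D.blocks := by
    refine Nat.eq_of_mul_eq_mul_left (show 0 < 2 by norm_num) ?_
    calc 2 * (n * D.rep) = 2 * n * D.rep := by ring
      _ = 6 * Multiset.card D.blocks := h0
      _ = 2 * (3 * Multiset.card D.blocks) := by ring
  have h9 : n ^ 2 * l2 = 9 * Multiset.card D.blocks := by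
    calc n ^ 2 * l2 = n * (n * l2) := by ring
      _ = n * (3 * D.rep) := by rw [h2]
      _ = 3 * (n * D.rep) := by ring
      _ = 3 * (3 * Multiset.card D.blocks) := by rw [hb]
      _ = 9 * Multiset.card D.blocks := by ring
  have h3n : Nat.Coprime 3 n := by
    rw [Nat.Prime.coprime_iff_not_dvd Nat.prime_three]
    rintro ⟨k, rfl⟩; omega
  have hdvd9 : (9 : ℕ) ∣ l2 := by
    have hcop : Nat.Coprime 9 (n ^ 2) := by
      have h := (h3n.mul_right h3n).mul (h3n.mul_right h3n)
      rw [show (9 : ℕ) = 3 * 3 from rfl, sq]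
      exact h
    exact hcop.dvd_of_dvd_mul_right (by rw [mul_comm]; exact ⟨_, h9⟩)
  have h3 : 3 * ((n - 1) * l1) = 2 * (n * l2) := by rw [h1, h2]; ring
  obtain ⟨m, rfl⟩ := hdvd9
  have hP : (n - 1) * l1 = 6 * (n * m) := by
    refine Nat.eq_of_mul_eq_mul_left (show 0 < 3 by norm_num) ?_
    rw [h3]; ring
  have h3l1 : 3 ∣ l1 := by
    have hd : (3 : ℕ) ∣ (n - 1) * l1 := ⟨2 * (n * m), by rw [hP]; ring⟩
    have hcop : Nat.Coprime 3 (n - 1) := by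
      rw [Nat.Prime.coprime_iff_not_dvd Nat.prime_three]
      rintro ⟨k, hk⟩; omega
    exact hcop.dvd_of_dvd_mul_left hd
  have hnl1 : n ∣ l1 := by
    have hd : n ∣ (n - 1) * l1 := ⟨6 * m, by rw [hP]; ring⟩
    have hcop : Nat.Coprime n (n - 1) := by
      have h : Nat.Coprime (1 + (n - 1)) (n - 1) :=
        Nat.coprime_add_self_left.mpr (Nat.coprime_one_left _)
      rwa [show 1 + (n - 1) = n by omega] at h
    exact hcop.dvd_of_dvd_mul_left hd
  have h3ndvd : 3 * n ∣ l1 := Nat.Coprime.mul_dvd_of_dvd_of_dvd h3n h3l1 hnl1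
  obtain ⟨w, hw⟩ := h3ndvd
  refine ⟨w, ?_, hw, ?_⟩
  · rcases Nat.eq_zero_or_pos w with h | h
    · subst h; simp at hw; omega
    · exact h
  · have hX : 3 * ((n - 1) * w) = 3 * (2 * m) := by
      have : n * (3 * ((n - 1) * w)) = n * (3 * (2 * m)) := by
        have := hP
        rw [hw] at this
        calc n * (3 * ((n - 1) * w)) = (n - 1) * (3 * n * w) := by ring
          _ = 6 * (n * m) := this
          _ = n * (3 * (2 * m)) := by ring
      exact Nat.eq_of_mul_eq_mul_left npos this
    have hXw : (n - 1) * w = 2 * m := Nat.eq_of_mul_eq_mul_left (by norm_num) hX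
    calc 2 * (9 * m) = 9 * ((n - 1) * w) := by rw [hXw]; ring
      _ = 9 * (n - 1) * w := by ring
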